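/- Let g ≥ 2 be an integer and let A be a finite non-solvable group satisfying 2√g(√g+1)² < |A| ≤ 12(g−1). Then g = 6 and A is isomorphic to the alternating group A₅ (in particular |A| = 60). -/

import Mathlib

set_option linter.unusedSectionVars false

open Equiv

universe u

section Helpers

variable {G : Type u} [Group G] [Finite G]

instance sylowFinite (p : ℕ) : Finite (Sylow p G) := by
  have h1 : Finite (Set G) := inferInstance
  have h2 : Finite (Subgroup G) :=
    Finite.of_injective (fun H : Subgroup G => (H : Set G)) fun _ _ h => SetLike.coe_injective h
  exact Finite.of_injective (fun P : Sylow p G => (P : Subgroup G)) fun _ _ h => Sylow.ext h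

lemma solv_ext (N : Subgroup G) [N.Normal] (h1 : IsSolvable N) (h2 : IsSolvable (G ⧸ N)) :
    IsSolvable G := by
  haveI : Group.IsSolvable N := h1
  haveI : Group.IsSolvable (G ⧸ N) := h2
  refine solvable_of_ker_le_range N.subtype (QuotientGroup.mk' N) ?_
  rw [QuotientGroup.ker_mk', Subgroup.range_subtype]

lemma solv_prime {p : ℕ} (hp : p.Prime) (h : Nat.card G = p) : IsSolvable G := by
  haveI : Fact p.Prime := ⟨hp⟩
  haveI := isCyclic_of_prime_card h
  letI := IsCyclic.commGroup (α := G)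
  exact isSolvable_of_comm fun a b => mul_comm a b

lemma solv_pgroup {p : ℕ} (hp : p.Prime) (h : IsPGroup p G) : IsSolvable G := by
  haveI : Fact p.Prime := ⟨hp⟩
  haveI := h.isNilpotent
  exact IsNilpotent.to_isSolvable

lemma solv_card_one (h : Nat.card G = 1) : IsSolvable G := by
  haveI : Subsingleton G := Finite.card_le_one_iff_subsingleton.mp h.le
  exact (inferInstance : Group.IsSolvable G)

lemma solv_card_dvd_pow {p k : ℕ} (hp : p.Prime) (h : Nat.card G ∣ p ^ k) : IsSolvable G := by
  haveI : Fact p.Prime := ⟨hp⟩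
  obtain ⟨m, _, hm⟩ := (Nat.dvd_prime_pow hp).mp h
  exact solv_pgroup hp (IsPGroup.of_card hm)

lemma sub_eq_of_le_of_card_le {H K : Subgroup G} (h : H ≤ K) (hc : Nat.card K ≤ Nat.card H) :
    H = K := by
  have e : Nat.card (H.subgroupOf K) = Nat.card H := Nat.card_congr (Subgroup.subgroupOfEquivOfLe h).toEquiv
  have : H.subgroupOf K = ⊤ := by
    apply Subgroup.eq_top_of_card_eq
    have hle : Nat.card (H.subgroupOf K) ≤ Nat.card K := by
      simpa using Subgroup.card_le_card_group (H.subgroupOf K)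
    omega
  exact le_antisymm h (Subgroup.subgroupOf_eq_top.mp this)


section Machinery
variable {G : Type u} [Group G] [Finite G]

lemma sylow_card_eq (p : ℕ) [Fact p.Prime] (P : Sylow p G) {n k : ℕ}
    (hG : Nat.card G = n) (h1 : p ^ k ∣ n) (h2 : ¬ p ^ (k + 1) ∣ n) :
    Nat.card (P : Subgroup G) = p ^ k ∧ (P : Subgroup G).index * p ^ k = n := by
  obtain ⟨a, ha⟩ := P.2.exists_card_eq
  have hmul : (P : Subgroup G).index * Nat.card (P : Subgroup G) = n := by
    rw [Subgroup.index_mul_card, hG]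
  have hnd : ¬ p ∣ (P : Subgroup G).index := P.not_dvd_index
  have hp := (Fact.out : p.Prime)
  have hak : a = k := by
    have hcop : Nat.Coprime (p ^ k) ((P : Subgroup G).index) :=
      Nat.Coprime.pow_left _ ((Nat.Prime.coprime_iff_not_dvd hp).mpr hnd)
    have h3 : p ^ k ∣ p ^ a := by
      have : p ^ k ∣ (P : Subgroup G).index * p ^ a := by rw [← ha, hmul]; exact h1
      exact (Nat.Coprime.dvd_of_dvd_mul_left hcop this)
    have h4 : k ≤ a := (Nat.pow_dvd_pow_iff_le_right hp.one_lt).mp h3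
    have h5 : ¬ k + 1 ≤ a := by
      intro hle
      apply h2
      calc p ^ (k+1) ∣ p ^ a := Nat.pow_dvd_pow p hle
        _ ∣ n := by rw [← hmul, ha]; exact Dvd.intro_left _ rfl
    omega
  subst hak
  exact ⟨ha, by rw [← ha]; exact hmul⟩

lemma sylow_normal_of_card_one (p : ℕ) [Fact p.Prime] (P : Sylow p G)
    (h : Nat.card (Sylow p G) = 1) : (P : Subgroup G).Normal := by
  haveI : Subsingleton (Sylow p G) := Finite.card_le_one_iff_subsingleton.mp h.le
  rw [← Subgroup.normalizer_eq_top_iff]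
  ext x
  simp only [Subgroup.mem_top, iff_true]
  have : x • P = P := Subsingleton.elim _ _
  exact Sylow.smul_eq_iff_mem_normalizer.mp this

lemma sylow_mod (p : ℕ) [Fact p.Prime] : Nat.card (Sylow p G) % p = 1 % p :=
  card_sylow_modEq_one p G

lemma sylow_card_pos (p : ℕ) [Fact p.Prime] : 0 < Nat.card (Sylow p G) := Nat.card_pos

-- facts about the kernel of a hom
lemma hom_facts {H : Type u} [Group H] (f : G →* H) :
    Nat.card f.ker * Nat.card (G ⧸ f.ker) = Nat.card G ∧
    Nat.card (G ⧸ f.ker) ∣ Nat.card H ∧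
    (IsSolvable H → IsSolvable f.ker → IsSolvable G) := by
  refine ⟨Subgroup.card_mul_index f.ker, ?_, fun h1 h2 => ?_⟩
  · classical
    rcases finite_or_infinite H with hH | hH
    · have := Nat.card_congr (QuotientGroup.quotientKerEquivRange f).toEquiv
      rw [this]
      exact Subgroup.card_subgroup_dvd_card f.range
    · simp [Nat.card_eq_zero_of_infinite]
  · haveI : Group.IsSolvable H := h1
    have : IsSolvable (G ⧸ f.ker) :=
      solvable_of_solvable_injective (QuotientGroup.kerLift_injective f)
    exact solv_ext f.ker h2 this

lemma toPermHom_sylow_ker_le (p : ℕ) [Fact p.Prime] (P : Sylow p G) :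
    (MulAction.toPermHom G (Sylow p G)).ker ≤ (Subgroup.normalizer (P : Set G)) := by
  intro g hg
  rw [← Sylow.smul_eq_iff_mem_normalizer]
  have : MulAction.toPermHom G (Sylow p G) g = 1 := hg
  have := congrArg (fun e => e P) this
  simpa using this

lemma sylow_normalizer_card (p : ℕ) [Fact p.Prime] (P : Sylow p G) :
    Nat.card (Sylow p G) * Nat.card ((Subgroup.normalizer (P : Set G))) = Nat.card G := by
  have h1 : Nat.card (Sylow p G) = (Subgroup.normalizer (P : Set G)).index := by
    rw [Sylow.card_eq_card_quotient_normalizer P, Subgroup.index_eq_card]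
  rw [h1, Subgroup.index_mul_card]

lemma toPermHom_coset_ker_le (H : Subgroup G) :
    (MulAction.toPermHom G (G ⧸ H)).ker ≤ H := by
  intro g hg
  have : MulAction.toPermHom G (G ⧸ H) g = 1 := hg
  have h2 := congrArg (fun e => e ((1 : G) : G ⧸ H)) this
  simp only [MulAction.toPermHom_apply, MulAction.toPerm_apply, Equiv.Perm.coe_one, id_eq] at h2
  rw [← MulAction.stabilizer_quotient H]
  exact h2

end Machinery
section SmallOrders
variable {G : Type u} [Group G] [Finite G]

/-- Generic: `|G| = p^k * q^j` with the number of `p`-Sylows forced to be 1. -/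
lemma solv_two_primes (p k q j : ℕ) (hp : Nat.Prime p) (hq : Nat.Prime q)
    {n : ℕ} (h : Nat.card G = n) (h1 : p ^ k ∣ n) (h2 : ¬ p ^ (k + 1) ∣ n)
    (hqj : n = p ^ k * q ^ j)
    (huniq : ∀ m, m ∣ q ^ j → m % p = 1 % p → m = 1) : IsSolvable G := by
  haveI : Fact (Nat.Prime p) := ⟨hp⟩
  obtain ⟨P⟩ : Nonempty (Sylow p G) := inferInstance
  obtain ⟨hc, hi⟩ := sylow_card_eq p P h h1 h2
  have hpk : 0 < p ^ k := Nat.pow_pos hp.pos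
  have hi2 : (P : Subgroup G).index = q ^ j := by
    have hx : (P : Subgroup G).index * p ^ k = q ^ j * p ^ k := by rw [hi, hqj]; ring
    exact Nat.eq_of_mul_eq_mul_right hpk hx
  have hm : Nat.card (Sylow p G) ∣ q ^ j := hi2 ▸ Sylow.card_dvd_index P
  have hm1 : Nat.card (Sylow p G) = 1 := huniq _ hm (sylow_mod p)
  haveI := sylow_normal_of_card_one p P hm1
  refine solv_ext _ (solv_pgroup hp P.isPGroup') ?_
  refine solv_card_dvd_pow (p := q) (k := j) hq ?_
  rw [← Subgroup.index_eq_card, hi2]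

lemma solv6 (h : Nat.card G = 6) : IsSolvable G :=
  solv_two_primes 3 1 2 1 (by norm_num) (by norm_num) h (by norm_num) (by norm_num)
    (by norm_num) (by intro m hm hmod; have h1 := Nat.pos_of_dvd_of_pos hm (by norm_num); have h2 := Nat.le_of_dvd (by norm_num) hm; interval_cases m <;> omega)

lemma solv10 (h : Nat.card G = 10) : IsSolvable G :=
  solv_two_primes 5 1 2 1 (by norm_num) (by norm_num) h (by norm_num) (by norm_num)
    (by norm_num) (by intro m hm hmod; have h1 := Nat.pos_of_dvd_of_pos hm (by norm_num); have h2 := Nat.le_of_dvd (by norm_num) hm; interval_cases m <;> omega)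

lemma solv15 (h : Nat.card G = 15) : IsSolvable G :=
  solv_two_primes 5 1 3 1 (by norm_num) (by norm_num) h (by norm_num) (by norm_num)
    (by norm_num) (by intro m hm hmod; have h1 := Nat.pos_of_dvd_of_pos hm (by norm_num); have h2 := Nat.le_of_dvd (by norm_num) hm; interval_cases m <;> omega)

lemma solv18 (h : Nat.card G = 18) : IsSolvable G :=
  solv_two_primes 3 2 2 1 (by norm_num) (by norm_num) h (by norm_num) (by norm_num)
    (by norm_num) (by intro m hm hmod; have h1 := Nat.pos_of_dvd_of_pos hm (by norm_num); have h2 := Nat.le_of_dvd (by norm_num) hm; interval_cases m <;> omega)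

lemma solv20 (h : Nat.card G = 20) : IsSolvable G :=
  solv_two_primes 5 1 2 2 (by norm_num) (by norm_num) h (by norm_num) (by norm_num)
    (by norm_num) (by intro m hm hmod; have h1 := Nat.pos_of_dvd_of_pos hm (by norm_num); have h2 := Nat.le_of_dvd (by norm_num) hm; interval_cases m <;> omega)

lemma quot_alternating_solvable {X : Type u} [Fintype X] [DecidableEq X] :
    IsSolvable (Equiv.Perm X ⧸ alternatingGroup X) := by
  haveI : Group.IsSolvable ℤˣ := inferInstance
  exact solvable_of_solvable_injective
    (QuotientGroup.kerLift_injective (Equiv.Perm.sign : Equiv.Perm X →* ℤˣ))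

lemma solv_perm_le3 {X : Type u} [Finite X] (h : Nat.card X ≤ 3) : IsSolvable (Equiv.Perm X) := by
  classical
  haveI : Fintype X := Fintype.ofFinite X
  rcases le_or_gt (Fintype.card X) 1 with h1 | h1
  · haveI : Subsingleton X := Fintype.card_le_one_iff_subsingleton.mp h1
    haveI : Subsingleton (Equiv.Perm X) :=
      ⟨fun a b => by ext x; exact Subsingleton.elim (a x) (b x)⟩
    exact (inferInstance : Group.IsSolvable (Equiv.Perm X))
  · haveI : Nontrivial X := Fintype.one_lt_card_iff_nontrivial.mp h1
    have halt : 2 * Nat.card (alternatingGroup X) = Nat.factorial (Fintype.card X) := by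
      rw [Nat.card_eq_fintype_card, two_mul_card_alternatingGroup, Fintype.card_perm]
    rw [Nat.card_eq_fintype_card] at h
    have hker : IsSolvable (alternatingGroup X) := by
      have hX : Fintype.card X = 2 ∨ Fintype.card X = 3 := by omega
      rcases hX with hX | hX <;> rw [hX] at halt
      · have hf : Nat.factorial 2 = 2 := rfl
        exact solv_card_one (by omega)
      · have hf : Nat.factorial 3 = 6 := rfl
        exact solv_prime (p := 3) (by norm_num) (by omega)
    exact solv_ext _ hker quot_alternating_solvable

lemma solv12 (h : Nat.card G = 12) : IsSolvable G := by
  haveI : Fact (Nat.Prime 2) := ⟨by norm_num⟩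
  obtain ⟨P⟩ : Nonempty (Sylow 2 G) := inferInstance
  obtain ⟨hc, hi⟩ := sylow_card_eq 2 P (k := 2) h (by norm_num) (by norm_num)
  norm_num at hi hc
  have hi2 : (P : Subgroup G).index = 3 := by omega
  have hm : Nat.card (Sylow 2 G) ∣ 3 := hi2 ▸ Sylow.card_dvd_index P
  have hmod := sylow_mod (G := G) 2
  have hpos := sylow_card_pos (G := G) 2
  have hm13 : Nat.card (Sylow 2 G) = 1 ∨ Nat.card (Sylow 2 G) = 3 := by
    have := Nat.le_of_dvd (by norm_num) hm
    interval_cases hB : (Nat.card (Sylow 2 G)) <;> omega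
  rcases hm13 with hm1 | hm3
  · haveI := sylow_normal_of_card_one 2 P hm1
    refine solv_ext _ (solv_pgroup (by norm_num) P.isPGroup') ?_
    refine solv_prime (p := 3) (by norm_num) ?_
    rw [← Subgroup.index_eq_card, hi2]
  · obtain ⟨hprod, hdvd, himp⟩ := hom_facts (MulAction.toPermHom G (Sylow 2 G))
    refine himp (solv_perm_le3 (by omega)) ?_
    refine solv_card_dvd_pow (p := 2) (k := 2) (by norm_num) ?_
    have hcard := Subgroup.card_dvd_of_le (toPermHom_sylow_ker_le 2 P)
    have hnorm := sylow_normalizer_card 2 P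
    rw [hm3, h] at hnorm
    have h4 : Nat.card ((Subgroup.normalizer (P : Set G))) = 4 := by omega
    rw [h4] at hcard
    exact hcard

lemma solv_perm_le4 {X : Type u} [Finite X] (h : Nat.card X ≤ 4) : IsSolvable (Equiv.Perm X) := by
  classical
  rcases le_or_gt (Nat.card X) 3 with h3 | h3
  · exact solv_perm_le3 h3
  haveI : Fintype X := Fintype.ofFinite X
  have h4 : Fintype.card X = 4 := by rw [← Nat.card_eq_fintype_card]; omega
  haveI : Nontrivial X := Fintype.one_lt_card_iff_nontrivial.mp (by omega)
  have halt : 2 * Nat.card (alternatingGroup X) = Nat.factorial (Fintype.card X) := by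
    rw [Nat.card_eq_fintype_card, two_mul_card_alternatingGroup, Fintype.card_perm]
  rw [h4] at halt
  have hf : Nat.factorial 4 = 24 := rfl
  have hker : IsSolvable (alternatingGroup X) := solv12 (by omega)
  exact solv_ext _ hker quot_alternating_solvable

lemma solv24 (h : Nat.card G = 24) : IsSolvable G := by
  haveI : Fact (Nat.Prime 3) := ⟨by norm_num⟩
  obtain ⟨P⟩ : Nonempty (Sylow 3 G) := inferInstance
  obtain ⟨hc, hi⟩ := sylow_card_eq 3 P (k := 1) h (by norm_num) (by norm_num)
  norm_num at hi hc
  have hi2 : (P : Subgroup G).index = 8 := by omega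
  have hm : Nat.card (Sylow 3 G) ∣ 8 := hi2 ▸ Sylow.card_dvd_index P
  have hmod := sylow_mod (G := G) 3
  have hpos := sylow_card_pos (G := G) 3
  have hm14 : Nat.card (Sylow 3 G) = 1 ∨ Nat.card (Sylow 3 G) = 4 := by
    have := Nat.le_of_dvd (by norm_num) hm
    interval_cases hB : (Nat.card (Sylow 3 G)) <;> omega
  rcases hm14 with hm1 | hm4
  · haveI := sylow_normal_of_card_one 3 P hm1
    refine solv_ext _ (solv_pgroup (by norm_num) P.isPGroup') ?_
    refine solv_card_dvd_pow (p := 2) (k := 3) (by norm_num) ?_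
    rw [← Subgroup.index_eq_card, hi2]
    norm_num
  · obtain ⟨hprod, hdvd, himp⟩ := hom_facts (MulAction.toPermHom G (Sylow 3 G))
    refine himp (solv_perm_le4 (by omega)) ?_
    have hcard := Subgroup.card_dvd_of_le (toPermHom_sylow_ker_le 3 P)
    have hnorm := sylow_normalizer_card 3 P
    rw [hm4, h] at hnorm
    have h6 : Nat.card ((Subgroup.normalizer (P : Set G))) = 6 := by omega
    rw [h6] at hcard
    -- kernel has order dividing 6
    have h1 := Nat.pos_of_dvd_of_pos hcard (by norm_num)
    have h2 := Nat.le_of_dvd (by norm_num) hcard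
    interval_cases hK : (Nat.card (MulAction.toPermHom G (Sylow 3 G)).ker)
    · exact solv_card_one hK
    · exact solv_prime (by norm_num) hK
    · exact solv_prime (by norm_num) hK
    · revert hcard; omega
    · revert hcard; omega
    · exact solv6 hK
end SmallOrders
section Counting
variable {G : Type u} [Group G] [Finite G]

lemma orderOf_dvd_card_subgroup {H : Subgroup G} {g : G} (hg : g ∈ H) :
    orderOf g ∣ Nat.card H := by
  have h1 := orderOf_dvd_natCard (⟨g, hg⟩ : H)
  have h2 : orderOf (H.subtype ⟨g, hg⟩) = orderOf (⟨g, hg⟩ : H) :=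
    orderOf_injective H.subtype H.subtype_injective _
  simpa using h2 ▸ h1

lemma order_prime_pow_of_mem_sylow {p : ℕ} [Fact p.Prime] (P : Sylow p G) {g : G}
    (hg : g ∈ (P : Subgroup G)) : ∃ k, orderOf g ∣ p ^ k := by
  obtain ⟨k, hk⟩ := P.isPGroup' ⟨g, hg⟩
  refine ⟨k, orderOf_dvd_of_pow_eq_one ?_⟩
  have := congrArg (Subtype.val) hk
  simpa using this

lemma sylow_eq_of_prime_card {p : ℕ} [Fact p.Prime]
    (hp : ∀ P : Sylow p G, Nat.card (P : Subgroup G) = p) (P Q : Sylow p G) (g : G)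
    (hP : g ∈ (P : Subgroup G)) (hQ : g ∈ (Q : Subgroup G)) (hg : g ≠ 1) : P = Q := by
  have hord : orderOf g = p := by
    have h1 : orderOf g ∣ p := hp P ▸ orderOf_dvd_card_subgroup hP
    rcases (Nat.dvd_prime Fact.out).mp h1 with h | h
    · exact absurd (orderOf_eq_one_iff.mp h) hg
    · exact h
  have hz : Nat.card (Subgroup.zpowers g) = p := by rw [Nat.card_zpowers, hord]
  have e1 : Subgroup.zpowers g = (P : Subgroup G) :=
    sub_eq_of_le_of_card_le (Subgroup.zpowers_le.mpr hP) (by rw [hz, hp P])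
  have e2 : Subgroup.zpowers g = (Q : Subgroup G) :=
    sub_eq_of_le_of_card_le (Subgroup.zpowers_le.mpr hQ) (by rw [hz, hp Q])
  exact Sylow.ext (by rw [← e1, e2])

open scoped Classical in
lemma card_sylow_union (p : ℕ) [Fact p.Prime] [Fintype G] {s : ℕ}
    (hcard : ∀ P : Sylow p G, Nat.card (P : Subgroup G) = s)
    (htriv : ∀ (P Q : Sylow p G) (g : G),
      g ∈ (P : Subgroup G) → g ∈ (Q : Subgroup G) → g ≠ 1 → P = Q) :
    (Finset.univ.filter
        (fun g : G => g ≠ 1 ∧ ∃ P : Sylow p G, g ∈ (P : Subgroup G))).card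
      = Nat.card (Sylow p G) * (s - 1) := by
  set f : G → Sylow p G := fun g =>
    if h : ∃ P : Sylow p G, g ∈ (P : Subgroup G) then h.choose else Classical.arbitrary _ with hf
  set S := Finset.univ.filter
    (fun g : G => g ≠ 1 ∧ ∃ P : Sylow p G, g ∈ (P : Subgroup G)) with hS
  haveI : Fintype (Sylow p G) := Fintype.ofFinite _
  have hfib : ∀ P : Sylow p G,
      (S.filter (fun g => f g = P))
      = Finset.univ.filter (fun g : G => g ∈ (P : Subgroup G) ∧ g ≠ 1) := by
    intro P
    ext g
    rw [hS]
    simp only [Finset.mem_filter, Finset.mem_univ, true_and]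
    constructor
    · rintro ⟨⟨hne, hex⟩, hfg⟩
      refine ⟨?_, hne⟩
      rw [hf] at hfg
      simp only [dif_pos hex] at hfg
      exact hfg ▸ hex.choose_spec
    · rintro ⟨hmem, hne⟩
      have hex : ∃ Q : Sylow p G, g ∈ (Q : Subgroup G) := ⟨P, hmem⟩
      refine ⟨⟨hne, hex⟩, ?_⟩
      rw [hf]
      simp only [dif_pos hex]
      exact htriv _ _ g hex.choose_spec hmem hne
  have hcardfib : ∀ P : Sylow p G,
      (Finset.univ.filter (fun g : G => g ∈ (P : Subgroup G) ∧ g ≠ 1)).card = s - 1 := by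
    intro P
    have h1 : (Finset.univ.filter (fun g : G => g ∈ (P : Subgroup G) ∧ g ≠ 1)).card
        = Fintype.card {g : G // g ∈ (P : Subgroup G) ∧ g ≠ 1} :=
      (Fintype.card_subtype _).symm
    have e : {g : G // g ∈ (P : Subgroup G) ∧ g ≠ 1} ≃
        {x : (P : Subgroup G) // ¬ (x = 1)} :=
      { toFun := fun g => ⟨⟨g.1, g.2.1⟩, fun hc => g.2.2 (by
          simpa [Subtype.ext_iff] using hc)⟩
        invFun := fun x => ⟨x.1.1, x.1.2, fun hc => x.2 (by
          exact Subtype.ext (by simpa using hc))⟩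
        left_inv := fun g => rfl
        right_inv := fun x => rfl }
    have h2 : Fintype.card {x : (P : Subgroup G) // ¬ (x = 1)}
        = Fintype.card (P : Subgroup G) - 1 := by
      rw [Fintype.card_subtype_compl, Fintype.card_subtype_eq]
    rw [h1, Fintype.card_congr e, h2, ← Nat.card_eq_fintype_card, hcard P]
  have step := Finset.card_eq_sum_card_fiberwise
    (s := S) (t := Finset.univ) (f := f) (fun x _ => Finset.mem_univ _)
  rw [step]
  have hsum : ∑ P : Sylow p G, (S.filter (fun g => f g = P)).card
      = ∑ _P : Sylow p G, (s - 1) :=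
    Finset.sum_congr rfl fun P _ => by rw [hfib P, hcardfib P]
  rw [hsum, Finset.sum_const, Finset.card_univ, ← Nat.card_eq_fintype_card, smul_eq_mul]

open scoped Classical in
lemma two_prime_count (p q : ℕ) [Fact p.Prime] [Fact q.Prime] (hpq : p ≠ q) {sp sq : ℕ}
    (hsp : ∀ P : Sylow p G, Nat.card (P : Subgroup G) = sp)
    (hsq : ∀ P : Sylow q G, Nat.card (P : Subgroup G) = sq)
    (htp : ∀ (P Q : Sylow p G) (g : G),
      g ∈ (P : Subgroup G) → g ∈ (Q : Subgroup G) → g ≠ 1 → P = Q)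
    (htq : ∀ (P Q : Sylow q G) (g : G),
      g ∈ (P : Subgroup G) → g ∈ (Q : Subgroup G) → g ≠ 1 → P = Q) :
    Nat.card (Sylow p G) * (sp - 1) + Nat.card (Sylow q G) * (sq - 1) + 1 ≤ Nat.card G := by
  haveI : Fintype G := Fintype.ofFinite G
  set Sp := Finset.univ.filter
    (fun g : G => g ≠ 1 ∧ ∃ P : Sylow p G, g ∈ (P : Subgroup G)) with hSp
  set Sq := Finset.univ.filter
    (fun g : G => g ≠ 1 ∧ ∃ P : Sylow q G, g ∈ (P : Subgroup G)) with hSq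
  have hdisj : Disjoint Sp Sq := by
    rw [Finset.disjoint_left]
    rintro g hg1 hg2
    rw [hSp, Finset.mem_filter] at hg1
    rw [hSq, Finset.mem_filter] at hg2
    obtain ⟨-, hne, P, hP⟩ := hg1
    obtain ⟨-, -, Q, hQ⟩ := hg2
    obtain ⟨k, hk⟩ := order_prime_pow_of_mem_sylow P hP
    obtain ⟨l, hl⟩ := order_prime_pow_of_mem_sylow Q hQ
    have hcop : Nat.Coprime (p ^ k) (q ^ l) :=
      Nat.Coprime.pow _ _ ((Nat.coprime_primes Fact.out Fact.out).mpr hpq)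
    have : orderOf g = 1 := Nat.eq_one_of_dvd_coprimes hcop hk hl
    exact hne (orderOf_eq_one_iff.mp this)
  have hone : (1 : G) ∉ Sp ∪ Sq := by
    intro hmem
    rcases Finset.mem_union.mp hmem with h | h
    · rw [hSp, Finset.mem_filter] at h; exact h.2.1 rfl
    · rw [hSq, Finset.mem_filter] at h; exact h.2.1 rfl
  have hcup : (insert (1 : G) (Sp ∪ Sq)).card = Sp.card + Sq.card + 1 := by
    rw [Finset.card_insert_of_notMem hone, Finset.card_union_of_disjoint hdisj]
  have hle : (insert (1 : G) (Sp ∪ Sq)).card ≤ Fintype.card G :=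
    Finset.card_le_card (Finset.subset_univ _)
  rw [hcup] at hle
  rw [hSp, hSq] at hle
  rw [card_sylow_union p hsp htp, card_sylow_union q hsq htq] at hle
  have hfin : Nat.card G = Fintype.card G := Nat.card_eq_fintype_card
  omega

lemma solv30 (h : Nat.card G = 30) : IsSolvable G := by
  haveI F5 : Fact (Nat.Prime 5) := ⟨by norm_num⟩
  haveI F3 : Fact (Nat.Prime 3) := ⟨by norm_num⟩
  have hs5 : ∀ P : Sylow 5 G, Nat.card (P : Subgroup G) = 5 := fun P => by
    simpa using (sylow_card_eq 5 P (k := 1) h (by norm_num) (by norm_num)).1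
  have hs3 : ∀ P : Sylow 3 G, Nat.card (P : Subgroup G) = 3 := fun P => by
    simpa using (sylow_card_eq 3 P (k := 1) h (by norm_num) (by norm_num)).1
  obtain ⟨P5⟩ : Nonempty (Sylow 5 G) := inferInstance
  obtain ⟨P3⟩ : Nonempty (Sylow 3 G) := inferInstance
  obtain ⟨hc5, hi5⟩ := sylow_card_eq 5 P5 (k := 1) h (by norm_num) (by norm_num)
  obtain ⟨hc3, hi3⟩ := sylow_card_eq 3 P3 (k := 1) h (by norm_num) (by norm_num)
  norm_num at hi5 hi3
  have hi5' : (P5 : Subgroup G).index = 6 := by omega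
  have hi3' : (P3 : Subgroup G).index = 10 := by omega
  have hm5 : Nat.card (Sylow 5 G) ∣ 6 := hi5' ▸ Sylow.card_dvd_index P5
  have hm3 : Nat.card (Sylow 3 G) ∣ 10 := hi3' ▸ Sylow.card_dvd_index P3
  have hmod5 := sylow_mod (G := G) 5
  have hmod3 := sylow_mod (G := G) 3
  have hpos5 := sylow_card_pos (G := G) 5
  have hpos3 := sylow_card_pos (G := G) 3
  have h5 : Nat.card (Sylow 5 G) = 1 ∨ Nat.card (Sylow 5 G) = 6 := by
    have := Nat.le_of_dvd (by norm_num) hm5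
    interval_cases hB : (Nat.card (Sylow 5 G)) <;> omega
  have h3 : Nat.card (Sylow 3 G) = 1 ∨ Nat.card (Sylow 3 G) = 10 := by
    have := Nat.le_of_dvd (by norm_num) hm3
    interval_cases hB : (Nat.card (Sylow 3 G)) <;> omega
  rcases h5 with h5 | h5
  · haveI := sylow_normal_of_card_one 5 P5 h5
    refine solv_ext _ (solv_pgroup (by norm_num) P5.isPGroup') ?_
    refine solv6 ?_
    rw [← Subgroup.index_eq_card, hi5']
  rcases h3 with h3 | h3
  · haveI := sylow_normal_of_card_one 3 P3 h3
    refine solv_ext _ (solv_pgroup (by norm_num) P3.isPGroup') ?_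
    refine solv10 ?_
    rw [← Subgroup.index_eq_card, hi3']
  · exfalso
    have hcount := two_prime_count (G := G) 5 3 (by norm_num) hs5 hs3
      (sylow_eq_of_prime_card hs5) (sylow_eq_of_prime_card hs3)
    rw [h5, h3, h] at hcount
    omega

end Counting
section MoreOrders
variable {G : Type u} [Group G] [Finite G]

lemma solv48 (h : Nat.card G = 48) : IsSolvable G := by
  haveI : Fact (Nat.Prime 2) := ⟨by norm_num⟩
  obtain ⟨P⟩ : Nonempty (Sylow 2 G) := inferInstance
  obtain ⟨hc, hi⟩ := sylow_card_eq 2 P (k := 4) h (by norm_num) (by norm_num)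
  norm_num at hi hc
  have hi2 : (P : Subgroup G).index = 3 := by omega
  have hm : Nat.card (Sylow 2 G) ∣ 3 := hi2 ▸ Sylow.card_dvd_index P
  have hmod := sylow_mod (G := G) 2
  have hpos := sylow_card_pos (G := G) 2
  have hm13 : Nat.card (Sylow 2 G) = 1 ∨ Nat.card (Sylow 2 G) = 3 := by
    have := Nat.le_of_dvd (by norm_num) hm
    interval_cases hB : (Nat.card (Sylow 2 G)) <;> omega
  rcases hm13 with hm1 | hm3
  · haveI := sylow_normal_of_card_one 2 P hm1
    refine solv_ext _ (solv_pgroup (by norm_num) P.isPGroup') ?_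
    refine solv_prime (p := 3) (by norm_num) ?_
    rw [← Subgroup.index_eq_card, hi2]
  · obtain ⟨hprod, hdvd, himp⟩ := hom_facts (MulAction.toPermHom G (Sylow 2 G))
    refine himp (solv_perm_le3 (by omega)) ?_
    refine solv_card_dvd_pow (p := 2) (k := 4) (by norm_num) ?_
    have hcard := Subgroup.card_dvd_of_le (toPermHom_sylow_ker_le 2 P)
    have hnorm := sylow_normalizer_card 2 P
    rw [hm3, h] at hnorm
    have h16 : Nat.card ((Subgroup.normalizer (P : Set G))) = 16 := by omega
    rw [h16] at hcard
    exact hcard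

lemma solv72 (h : Nat.card G = 72) : IsSolvable G := by
  haveI : Fact (Nat.Prime 3) := ⟨by norm_num⟩
  obtain ⟨P⟩ : Nonempty (Sylow 3 G) := inferInstance
  obtain ⟨hc, hi⟩ := sylow_card_eq 3 P (k := 2) h (by norm_num) (by norm_num)
  norm_num at hi hc
  have hi2 : (P : Subgroup G).index = 8 := by omega
  have hm : Nat.card (Sylow 3 G) ∣ 8 := hi2 ▸ Sylow.card_dvd_index P
  have hmod := sylow_mod (G := G) 3
  have hpos := sylow_card_pos (G := G) 3
  have hm14 : Nat.card (Sylow 3 G) = 1 ∨ Nat.card (Sylow 3 G) = 4 := by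
    have := Nat.le_of_dvd (by norm_num) hm
    interval_cases hB : (Nat.card (Sylow 3 G)) <;> omega
  rcases hm14 with hm1 | hm4
  · haveI := sylow_normal_of_card_one 3 P hm1
    refine solv_ext _ (solv_pgroup (by norm_num) P.isPGroup') ?_
    refine solv_card_dvd_pow (p := 2) (k := 3) (by norm_num) ?_
    rw [← Subgroup.index_eq_card, hi2]
    norm_num
  · obtain ⟨hprod, hdvd, himp⟩ := hom_facts (MulAction.toPermHom G (Sylow 3 G))
    refine himp (solv_perm_le4 (by omega)) ?_
    have hcard := Subgroup.card_dvd_of_le (toPermHom_sylow_ker_le 3 P)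
    have hnorm := sylow_normalizer_card 3 P
    rw [hm4, h] at hnorm
    have h18 : Nat.card ((Subgroup.normalizer (P : Set G))) = 18 := by omega
    rw [h18] at hcard
    have h1 := Nat.pos_of_dvd_of_pos hcard (by norm_num)
    have h2 := Nat.le_of_dvd (by norm_num) hcard
    interval_cases hK : (Nat.card (MulAction.toPermHom G (Sylow 3 G)).ker)
    · exact solv_card_one hK
    · exact solv_prime (by norm_num) hK
    · exact solv_prime (by norm_num) hK
    · revert hcard; omega
    · revert hcard; omega
    · exact solv6 hK
    · revert hcard; omega
    · revert hcard; omega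
    · exact solv_card_dvd_pow (p := 3) (k := 2) (by norm_num) (by rw [hK]; norm_num)
    · revert hcard; omega
    · revert hcard; omega
    · revert hcard; omega
    · revert hcard; omega
    · revert hcard; omega
    · revert hcard; omega
    · revert hcard; omega
    · revert hcard; omega
    · exact solv18 hK

lemma solv84 (h : Nat.card G = 84) : IsSolvable G := by
  haveI : Fact (Nat.Prime 7) := ⟨by norm_num⟩
  obtain ⟨P⟩ : Nonempty (Sylow 7 G) := inferInstance
  obtain ⟨hc, hi⟩ := sylow_card_eq 7 P (k := 1) h (by norm_num) (by norm_num)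
  norm_num at hi hc
  have hi2 : (P : Subgroup G).index = 12 := by omega
  have hm : Nat.card (Sylow 7 G) ∣ 12 := hi2 ▸ Sylow.card_dvd_index P
  have hmod := sylow_mod (G := G) 7
  have hpos := sylow_card_pos (G := G) 7
  have hm1 : Nat.card (Sylow 7 G) = 1 := by
    have := Nat.le_of_dvd (by norm_num) hm
    interval_cases hB : (Nat.card (Sylow 7 G)) <;> omega
  haveI := sylow_normal_of_card_one 7 P hm1
  refine solv_ext _ (solv_pgroup (by norm_num) P.isPGroup') ?_
  refine solv12 ?_
  rw [← Subgroup.index_eq_card, hi2]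

lemma solv_dvd60 (h : Nat.card G ∣ 60) (hne : Nat.card G ≠ 60) : IsSolvable G := by
  have hpos : 0 < Nat.card G := Nat.card_pos
  have hle : Nat.card G ≤ 60 := Nat.le_of_dvd (by norm_num) h
  have hd : Nat.card G = 1 ∨ Nat.card G = 2 ∨ Nat.card G = 3 ∨ Nat.card G = 4 ∨
      Nat.card G = 5 ∨ Nat.card G = 6 ∨ Nat.card G = 10 ∨ Nat.card G = 12 ∨
      Nat.card G = 15 ∨ Nat.card G = 20 ∨ Nat.card G = 30 := by
    interval_cases hc : (Nat.card G) <;> omega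
  rcases hd with h'|h'|h'|h'|h'|h'|h'|h'|h'|h'|h'
  · exact solv_card_one h'
  · exact solv_prime (by norm_num) h'
  · exact solv_prime (by norm_num) h'
  · exact solv_card_dvd_pow (p := 2) (k := 2) (by norm_num) (by rw [h']; norm_num)
  · exact solv_prime (by norm_num) h'
  · exact solv6 h'
  · exact solv10 h'
  · exact solv12 h'
  · exact solv15 h'
  · exact solv20 h'
  · exact solv30 h'

end MoreOrders
section AltCongr

variable {X : Type u} {Y : Type v} [Fintype X] [DecidableEq X] [Fintype Y] [DecidableEq Y]

/-- `Equiv.permCongr` as a `MulEquiv`. -/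
def permCongrMulEquiv (e : X ≃ Y) : Equiv.Perm X ≃* Equiv.Perm Y :=
  { e.permCongr with
    map_mul' := fun a b => by
      ext y
      simp [Equiv.permCongr_apply, Equiv.Perm.mul_apply] }

lemma permCongrMulEquiv_sign (e : X ≃ Y) (σ : Equiv.Perm X) :
    Equiv.Perm.sign (permCongrMulEquiv e σ) = Equiv.Perm.sign σ :=
  Equiv.Perm.sign_permCongr e σ

lemma map_alternating (e : X ≃ Y) :
    (alternatingGroup X).map (permCongrMulEquiv e : Equiv.Perm X →* Equiv.Perm Y)
      = alternatingGroup Y := by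
  ext τ
  constructor
  · rintro ⟨σ, hσ, rfl⟩
    have hσ1 : Equiv.Perm.sign σ = 1 := hσ
    show Equiv.Perm.sign ((permCongrMulEquiv e) σ) = 1
    rw [permCongrMulEquiv_sign, hσ1]
  · intro hτ
    have hτ1 : Equiv.Perm.sign τ = 1 := hτ
    refine ⟨(permCongrMulEquiv e).symm τ, ?_, (permCongrMulEquiv e).apply_symm_apply τ⟩
    show Equiv.Perm.sign ((permCongrMulEquiv e).symm τ) = 1
    have hsymm : (permCongrMulEquiv e).symm τ = permCongrMulEquiv e.symm τ := by
      apply (permCongrMulEquiv e).injective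
      rw [(permCongrMulEquiv e).apply_symm_apply]
      ext x
      simp [permCongrMulEquiv, Equiv.permCongr_apply]
    rw [hsymm, permCongrMulEquiv_sign, hτ1]

/-- An equivalence of types induces an isomorphism of alternating groups. -/
noncomputable def altCongr (e : X ≃ Y) :
    alternatingGroup X ≃* alternatingGroup Y :=
  ((permCongrMulEquiv e).subgroupMap (alternatingGroup X)).trans
    (MulEquiv.subgroupCongr (map_alternating e))

end AltCongr

section Sixty

variable {G : Type u} [Group G] [Finite G]

lemma perm_card (Y : Type u) [Finite Y] :
    Nat.card (Equiv.Perm Y) = Nat.factorial (Nat.card Y) := by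
  classical
  haveI : Fintype Y := Fintype.ofFinite Y
  rw [Nat.card_eq_fintype_card, Nat.card_eq_fintype_card, Fintype.card_perm]

lemma nonsolv60 (hG : Nat.card G = 60) (hns : ¬ IsSolvable G) :
    Nonempty (G ≃* alternatingGroup (Fin 5)) := by
  classical
  haveI F2 : Fact (Nat.Prime 2) := ⟨by norm_num⟩
  haveI F5 : Fact (Nat.Prime 5) := ⟨by norm_num⟩
  -- no normal subgroup of order other than 1 and 60
  have contra : ∀ K : Subgroup G, K.Normal → Nat.card K ≠ 1 → Nat.card K ≠ 60 → False := by
    intro K hKn h1 h60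
    have hd : Nat.card K ∣ 60 := hG ▸ Subgroup.card_subgroup_dvd_card K
    have hmul : Nat.card K * Nat.card (G ⧸ K) = 60 := by
      rw [← hG, ← Subgroup.index_eq_card]; exact Subgroup.card_mul_index K
    have hsolvK : IsSolvable K := solv_dvd60 hd h60
    have hdq : Nat.card (G ⧸ K) ∣ 60 := Dvd.intro_left _ hmul
    have hq60 : Nat.card (G ⧸ K) ≠ 60 := by
      intro h
      rw [h] at hmul
      exact h1 (Nat.eq_of_mul_eq_mul_right (by norm_num) (by omega : Nat.card K * 60 = 1 * 60))
    have hsolvQ : IsSolvable (G ⧸ K) := solv_dvd60 hdq hq60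
    exact hns (solv_ext K hsolvK hsolvQ)
  -- the good case: a subgroup of order 12 gives the result
  have key : ∀ H : Subgroup G, Nat.card H = 12 → Nonempty (G ≃* alternatingGroup (Fin 5)) := by
    intro H h12
    have hmi := Subgroup.card_mul_index H
    rw [h12, hG] at hmi
    have hidx : H.index = 5 := by omega
    have hYcard : Nat.card (G ⧸ H) = 5 := by rw [← Subgroup.index_eq_card, hidx]
    set f := MulAction.toPermHom G (G ⧸ H) with hfdef
    have hker_le : f.ker ≤ H := toPermHom_coset_ker_le H
    have hkd : Nat.card f.ker ∣ 12 := h12 ▸ Subgroup.card_dvd_of_le hker_le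
    have hker1 : Nat.card f.ker = 1 := by
      by_contra hne
      exact contra f.ker inferInstance hne (by intro h60; rw [h60] at hkd; norm_num at hkd)
    have hinj : Function.Injective f := by
      rw [← MonoidHom.ker_eq_bot_iff]
      exact (Subgroup.eq_bot_iff_card (H := f.ker)).mpr hker1
    haveI : Fintype (G ⧸ H) := Fintype.ofFinite _
    have hY5 : Fintype.card (G ⧸ H) = 5 := by rw [← Nat.card_eq_fintype_card]; exact hYcard
    haveI : Nontrivial (G ⧸ H) := Fintype.one_lt_card_iff_nontrivial.mp (by omega)
    have hpcard : Nat.card (Equiv.Perm (G ⧸ H)) = 120 := by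
      rw [perm_card, hYcard]; rfl
    have hrange : Nat.card f.range = 60 := by
      rw [← Nat.card_congr (MonoidHom.ofInjective hinj).toEquiv, hG]
    have hridx : f.range.index = 2 := by
      have := Subgroup.card_mul_index f.range
      rw [hrange, hpcard] at this
      omega
    have halt_le : alternatingGroup (G ⧸ H) ≤ f.range := by
      rw [← Equiv.Perm.closure_three_cycles_eq_alternating, Subgroup.closure_le]
      rintro σ hσ
      have h3 : orderOf σ = 3 := (hσ : Equiv.Perm.IsThreeCycle σ).orderOf
      have hs : (σ ^ 2) ^ 2 = σ := by
        rw [← pow_mul]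
        have ho : σ ^ 3 = 1 := by rw [← h3]; exact pow_orderOf_eq_one σ
        show σ ^ 4 = σ
        rw [show (4 : ℕ) = 3 + 1 from rfl, pow_succ, ho, one_mul]
      have hmem := Subgroup.sq_mem_of_index_two hridx (σ ^ 2)
      rw [hs] at hmem
      exact hmem
    have haltcard : Nat.card (alternatingGroup (G ⧸ H)) = 60 := by
      have h2 := two_mul_card_alternatingGroup (α := G ⧸ H)
      rw [Fintype.card_perm, hY5] at h2
      have h120 : Nat.factorial 5 = 120 := rfl
      rw [Nat.card_eq_fintype_card]
      omega
    have heq : alternatingGroup (G ⧸ H) = f.range :=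
      sub_eq_of_le_of_card_le halt_le (by rw [hrange, haltcard])
    have e1 : G ≃* f.range := MonoidHom.ofInjective hinj
    have e2 : f.range ≃* alternatingGroup (G ⧸ H) := MulEquiv.subgroupCongr heq.symm
    have e0 : (G ⧸ H) ≃ Fin 5 := Fintype.equivFinOfCardEq hY5
    exact ⟨e1.trans (e2.trans (altCongr e0))⟩
  -- helper killing actions with small permutation target
  have act_kill : ∀ (H : Subgroup G), Nat.card H ∣ 20 →
      ∀ (Y : Type u) (_ : Finite Y) (f : G →* Equiv.Perm Y),
      Nat.card (Equiv.Perm Y) = 6 → f.ker ≤ H → False := by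
    intro H hH Y hFin f hY hker
    obtain ⟨hmul, hdvd, -⟩ := hom_facts f
    rw [hY] at hdvd
    have hKd : Nat.card f.ker ∣ 20 := dvd_trans (Subgroup.card_dvd_of_le hker) hH
    refine contra f.ker inferInstance ?_ ?_
    · intro h1
      rw [h1, one_mul, hG] at hmul
      rw [hmul] at hdvd
      norm_num at hdvd
    · intro h60
      rw [h60] at hKd
      norm_num at hKd
  -- Sylow 2 analysis
  obtain ⟨P2⟩ : Nonempty (Sylow 2 G) := inferInstance
  obtain ⟨hc2, hi2⟩ := sylow_card_eq 2 P2 (k := 2) hG (by norm_num) (by norm_num)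
  norm_num at hc2 hi2
  have hi2' : (P2 : Subgroup G).index = 15 := by omega
  have hm2 : Nat.card (Sylow 2 G) ∣ 15 := hi2' ▸ Sylow.card_dvd_index P2
  have hmod2 := sylow_mod (G := G) 2
  have hpos2 := sylow_card_pos (G := G) 2
  have hm2cases : Nat.card (Sylow 2 G) = 1 ∨ Nat.card (Sylow 2 G) = 3 ∨
      Nat.card (Sylow 2 G) = 5 ∨ Nat.card (Sylow 2 G) = 15 := by
    have := Nat.le_of_dvd (by norm_num) hm2
    interval_cases hB : (Nat.card (Sylow 2 G)) <;> omega
  have hnorm2 := sylow_normalizer_card 2 P2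
  rw [hG] at hnorm2
  rcases hm2cases with hm | hm | hm | hm
  · -- unique Sylow 2 is normal of order 4 : contradiction
    exact (contra (P2 : Subgroup G) (sylow_normal_of_card_one 2 P2 hm)
      (by omega) (by omega)).elim
  · -- 3 Sylow 2-subgroups : action on them kills G
    exfalso
    rw [hm] at hnorm2
    have h20 : Nat.card ((Subgroup.normalizer (P2 : Set G))) = 20 := by omega
    refine act_kill ((Subgroup.normalizer (P2 : Set G))) (by rw [h20]) (Sylow 2 G) inferInstance
      (MulAction.toPermHom G (Sylow 2 G)) ?_ (toPermHom_sylow_ker_le 2 P2)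
    rw [perm_card, hm]
    rfl
  · -- 5 Sylow 2-subgroups : normalizer has order 12
    rw [hm] at hnorm2
    exact key ((Subgroup.normalizer (P2 : Set G))) (by omega)
  · -- 15 Sylow 2-subgroups
    by_cases htriv : ∀ (P Q : Sylow 2 G) (g : G),
        g ∈ (P : Subgroup G) → g ∈ (Q : Subgroup G) → g ≠ 1 → P = Q
    · -- counting contradiction
      exfalso
      have hs2 : ∀ P : Sylow 2 G, Nat.card (P : Subgroup G) = 4 := fun P => by
        simpa using (sylow_card_eq 2 P (k := 2) hG (by norm_num) (by norm_num)).1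
      have hs5 : ∀ P : Sylow 5 G, Nat.card (P : Subgroup G) = 5 := fun P => by
        simpa using (sylow_card_eq 5 P (k := 1) hG (by norm_num) (by norm_num)).1
      obtain ⟨P5⟩ : Nonempty (Sylow 5 G) := inferInstance
      obtain ⟨hc5, hi5⟩ := sylow_card_eq 5 P5 (k := 1) hG (by norm_num) (by norm_num)
      norm_num at hc5 hi5
      have hi5' : (P5 : Subgroup G).index = 12 := by omega
      have hm5 : Nat.card (Sylow 5 G) ∣ 12 := hi5' ▸ Sylow.card_dvd_index P5
      have hmod5 := sylow_mod (G := G) 5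
      have hpos5 := sylow_card_pos (G := G) 5
      have hm5cases : Nat.card (Sylow 5 G) = 1 ∨ Nat.card (Sylow 5 G) = 6 := by
        have := Nat.le_of_dvd (by norm_num) hm5
        interval_cases hB : (Nat.card (Sylow 5 G)) <;> omega
      rcases hm5cases with hm5' | hm5'
      · exact contra (P5 : Subgroup G) (sylow_normal_of_card_one 5 P5 hm5') (by omega) (by omega)
      · have hcount := two_prime_count (G := G) 2 5 (by norm_num) hs2 hs5 htriv
          (sylow_eq_of_prime_card hs5)
        rw [hm, hm5', hG] at hcount
        omega
    · -- two Sylow 2-subgroups intersect nontrivially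
      push_neg at htriv
      obtain ⟨P, Q, g, hgP, hgQ, hg1, hPQ⟩ := htriv
      have hs2 : ∀ R : Sylow 2 G, Nat.card (R : Subgroup G) = 4 := fun R => by
        simpa using (sylow_card_eq 2 R (k := 2) hG (by norm_num) (by norm_num)).1
      have hordvd : orderOf g ∣ 4 := (hs2 P) ▸ orderOf_dvd_card_subgroup hgP
      have hordpos : 0 < orderOf g := orderOf_pos g
      have hordne1 : orderOf g ≠ 1 := fun h => hg1 (orderOf_eq_one_iff.mp h)
      have hord : orderOf g = 2 ∨ orderOf g = 4 := by
        have := Nat.le_of_dvd (by norm_num) hordvd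
        interval_cases hB : (orderOf g) <;> omega
      rcases hord with hord | hord
      swap
      · -- order 4 : the two Sylows coincide, contradiction
        exfalso
        have hzc : Nat.card (Subgroup.zpowers g) = 4 := by rw [Nat.card_zpowers, hord]
        have e1 : Subgroup.zpowers g = (P : Subgroup G) :=
          sub_eq_of_le_of_card_le (Subgroup.zpowers_le.mpr hgP) (by rw [hzc, hs2 P])
        have e2 : Subgroup.zpowers g = (Q : Subgroup G) :=
          sub_eq_of_le_of_card_le (Subgroup.zpowers_le.mpr hgQ) (by rw [hzc, hs2 Q])
        exact hPQ (Sylow.ext (by rw [← e1, e2]))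
      -- order 2 : C = <g> and its normalizer
      set C := Subgroup.zpowers g with hC
      have hCcard : Nat.card C = 2 := by rw [hC, Nat.card_zpowers, hord]
      have conj_fix : ∀ (y : G), Commute y g → ∀ c ∈ C, y * c * y⁻¹ = c := by
        intro y hy c hc
        obtain ⟨k, hk⟩ := Subgroup.mem_zpowers_iff.mp hc
        rw [← hk, (hy.zpow_right k).eq]
        group
      have norm_of_comm : ∀ (y : G), Commute y g → y ∈ (Subgroup.normalizer (C : Set G)) := by
        intro y hy
        rw [Subgroup.mem_normalizer_iff]
        intro h
        constructor
        · intro hh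
          rw [conj_fix y hy h hh]
          exact hh
        · intro hh
          have heq : h = y⁻¹ * (y * h * y⁻¹) * y⁻¹⁻¹ := by group
          rw [heq, conj_fix y⁻¹ hy.inv_left _ hh]
          exact hh
      have hcomm_of_mem : ∀ (R : Sylow 2 G), g ∈ (R : Subgroup G) →
          ∀ x ∈ (R : Subgroup G), Commute x g := by
        intro R hgR x hx
        have hcomm := IsPGroup.commutative_of_card_eq_prime_sq (p := 2)
          (G := (R : Subgroup G)) (by rw [hs2 R]; norm_num)
        have := hcomm ⟨x, hx⟩ ⟨g, hgR⟩
        have := congrArg (Subtype.val) this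
        simpa [Commute, SemiconjBy] using this
      have hPle : (P : Subgroup G) ≤ (Subgroup.normalizer (C : Set G)) := fun x hx =>
        norm_of_comm x (hcomm_of_mem P hgP x hx)
      have hQle : (Q : Subgroup G) ≤ (Subgroup.normalizer (C : Set G)) := fun x hx =>
        norm_of_comm x (hcomm_of_mem Q hgQ x hx)
      have hd4 : 4 ∣ Nat.card (Subgroup.normalizer (C : Set G)) := (hs2 P) ▸ Subgroup.card_dvd_of_le hPle
      have hd60 : Nat.card (Subgroup.normalizer (C : Set G)) ∣ 60 := hG ▸ Subgroup.card_subgroup_dvd_card _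
      have hne4 : Nat.card (Subgroup.normalizer (C : Set G)) ≠ 4 := by
        intro h4
        have hQP : ¬ (Q : Subgroup G) ≤ (P : Subgroup G) := by
          intro hle
          exact hPQ (Sylow.ext (sub_eq_of_le_of_card_le hle (by rw [hs2 P, hs2 Q]))).symm
        obtain ⟨q, hqQ, hqP⟩ := SetLike.not_le_iff_exists.mp hQP
        have : (P : Subgroup G) = (Subgroup.normalizer (C : Set G)) :=
          sub_eq_of_le_of_card_le hPle (by rw [h4, hs2 P])
        exact hqP (this ▸ hQle hqQ)
      have htri : Nat.card (Subgroup.normalizer (C : Set G)) = 12 ∨ Nat.card (Subgroup.normalizer (C : Set G)) = 20 ∨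
          Nat.card (Subgroup.normalizer (C : Set G)) = 60 := by
        have hle60 := Nat.le_of_dvd (by norm_num) hd60
        have hpos := Nat.card_pos (α := (Subgroup.normalizer (C : Set G)))
        interval_cases hB : (Nat.card (Subgroup.normalizer (C : Set G))) <;> omega
      rcases htri with hN | hN | hN
      · exact key (Subgroup.normalizer (C : Set G)) hN
      · -- normalizer of order 20 : coset action
        exfalso
        have hmi := Subgroup.card_mul_index (Subgroup.normalizer (C : Set G))
        rw [hN, hG] at hmi
        have hidx : (Subgroup.normalizer (C : Set G)).index = 3 := by omega
        refine act_kill (Subgroup.normalizer (C : Set G)) (by rw [hN]) (G ⧸ (Subgroup.normalizer (C : Set G))) inferInstance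
          (MulAction.toPermHom G (G ⧸ (Subgroup.normalizer (C : Set G)))) ?_ (toPermHom_coset_ker_le _)
        rw [perm_card, ← Subgroup.index_eq_card, hidx]
        rfl
      · -- normalizer is everything : C is normal, contradiction
        exfalso
        have : (Subgroup.normalizer (C : Set G)) = ⊤ := Subgroup.eq_top_of_card_eq _ (by rw [hN, hG])
        have hCn : C.Normal := Subgroup.normalizer_eq_top_iff.mp this
        exact contra C hCn (by omega) (by omega)

end Sixty
/-- If `g ≥ 2` and `A` is a finite non-solvable group with
`2√g(√g+1)² < |A| ≤ 12(g−1)`, then `g = 6` and `A ≅ A₅`. -/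
theorem genus_six_icosahedral {A : Type*} [Group A] [Finite A] (g : ℕ) (hg : 2 ≤ g)
    (hns : ¬ IsSolvable A)
    (hlt : 2 * Real.sqrt g * (Real.sqrt g + 1) ^ 2 < (Nat.card A : ℝ))
    (hle : (Nat.card A : ℝ) ≤ 12 * ((g : ℝ) - 1)) :
    g = 6 ∧ Nonempty (A ≃* alternatingGroup (Fin 5)) := by
  have hg8 : g ≤ 8 := by
    by_contra hgt
    push_neg at hgt
    have h9 : (9 : ℝ) ≤ (g : ℝ) := by exact_mod_cast hgt
    set s := Real.sqrt (g : ℝ) with hsdef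
    have hs0 : (0 : ℝ) ≤ s := Real.sqrt_nonneg _
    have hs2 : s ^ 2 = (g : ℝ) := Real.sq_sqrt (by positivity)
    have hs3 : (3 : ℝ) ≤ s := by nlinarith
    have hkey : 12 * ((g : ℝ) - 1) ≤ 2 * s * (s + 1) ^ 2 := by
      nlinarith [mul_nonneg (mul_nonneg (by linarith : (0:ℝ) ≤ s + 1)
        (by linarith : (0:ℝ) ≤ s - 2)) (by linarith : (0:ℝ) ≤ s - 3)]
    linarith
  interval_cases g
  -- g = 2
  · exfalso
    push_cast at hlt hle
    set s := Real.sqrt (2 : ℝ) with hsdef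
    have hs0 : (0 : ℝ) ≤ s := Real.sqrt_nonneg _
    have hs2 : s ^ 2 = (2 : ℝ) := Real.sq_sqrt (by norm_num)
    have hsr : (2/3 : ℝ) ≤ s := by nlinarith
    have hexp : 2 * s * (s + 1) ^ 2 = 6 * s + 8 := by
      have h1 : 2 * s * (s + 1) ^ 2 = 2 * (s ^ 2 * s) + 4 * s ^ 2 + 2 * s := by ring
      rw [h1, hs2]; ring
    rw [hexp] at hlt
    linarith
  -- g = 3
  · exfalso
    push_cast at hlt hle
    set s := Real.sqrt (3 : ℝ) with hsdef
    have hs0 : (0 : ℝ) ≤ s := Real.sqrt_nonneg _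
    have hs2 : s ^ 2 = (3 : ℝ) := Real.sq_sqrt (by norm_num)
    have hsr : (3/2 : ℝ) ≤ s := by nlinarith
    have hexp : 2 * s * (s + 1) ^ 2 = 8 * s + 12 := by
      have h1 : 2 * s * (s + 1) ^ 2 = 2 * (s ^ 2 * s) + 4 * s ^ 2 + 2 * s := by ring
      rw [h1, hs2]; ring
    rw [hexp] at hlt
    linarith
  -- g = 4
  · exfalso
    push_cast at hlt hle
    set s := Real.sqrt (4 : ℝ) with hsdef
    have hs0 : (0 : ℝ) ≤ s := Real.sqrt_nonneg _
    have hs2 : s ^ 2 = (4 : ℝ) := Real.sq_sqrt (by norm_num)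
    have hsr : (2 : ℝ) ≤ s := by nlinarith
    have hexp : 2 * s * (s + 1) ^ 2 = 10 * s + 16 := by
      have h1 : 2 * s * (s + 1) ^ 2 = 2 * (s ^ 2 * s) + 4 * s ^ 2 + 2 * s := by ring
      rw [h1, hs2]; ring
    rw [hexp] at hlt
    linarith
  -- g = 5
  · exfalso
    push_cast at hlt hle
    set s := Real.sqrt (5 : ℝ) with hsdef
    have hs0 : (0 : ℝ) ≤ s := Real.sqrt_nonneg _
    have hs2 : s ^ 2 = (5 : ℝ) := Real.sq_sqrt (by norm_num)
    have hsr : (11/5 : ℝ) ≤ s := by nlinarith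
    have hexp : 2 * s * (s + 1) ^ 2 = 12 * s + 20 := by
      have h1 : 2 * s * (s + 1) ^ 2 = 2 * (s ^ 2 * s) + 4 * s ^ 2 + 2 * s := by ring
      rw [h1, hs2]; ring
    rw [hexp] at hlt
    have hub : Nat.card A ≤ 48 := by exact_mod_cast (by linarith : ((Nat.card A : ℕ) : ℝ) ≤ 48)
    have hlb : 46 < Nat.card A := by exact_mod_cast (by linarith : (46 : ℝ) < ((Nat.card A : ℕ) : ℝ))
    have hc : Nat.card A = 47 ∨ Nat.card A = 48 := by omega
    rcases hc with h | h
    · exact hns (solv_prime (by norm_num) h)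
    · exact hns (solv48 h)
  -- g = 6
  · push_cast at hlt hle
    set s := Real.sqrt (6 : ℝ) with hsdef
    have hs0 : (0 : ℝ) ≤ s := Real.sqrt_nonneg _
    have hs2 : s ^ 2 = (6 : ℝ) := Real.sq_sqrt (by norm_num)
    have hsr : (22/9 : ℝ) ≤ s := by nlinarith
    have hexp : 2 * s * (s + 1) ^ 2 = 14 * s + 24 := by
      have h1 : 2 * s * (s + 1) ^ 2 = 2 * (s ^ 2 * s) + 4 * s ^ 2 + 2 * s := by ring
      rw [h1, hs2]; ring
    rw [hexp] at hlt
    have hub : Nat.card A ≤ 60 := by exact_mod_cast (by linarith : ((Nat.card A : ℕ) : ℝ) ≤ 60)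
    have hlb : 58 < Nat.card A := by exact_mod_cast (by linarith : (58 : ℝ) < ((Nat.card A : ℕ) : ℝ))
    have hc : Nat.card A = 59 ∨ Nat.card A = 60 := by omega
    rcases hc with h | h
    · exact absurd (solv_prime (by norm_num) h) hns
    · exact ⟨rfl, nonsolv60 h hns⟩
  -- g = 7
  · exfalso
    push_cast at hlt hle
    set s := Real.sqrt (7 : ℝ) with hsdef
    have hs0 : (0 : ℝ) ≤ s := Real.sqrt_nonneg _
    have hs2 : s ^ 2 = (7 : ℝ) := Real.sq_sqrt (by norm_num)
    have hsr : (29/11 : ℝ) ≤ s := by nlinarith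
    have hexp : 2 * s * (s + 1) ^ 2 = 16 * s + 28 := by
      have h1 : 2 * s * (s + 1) ^ 2 = 2 * (s ^ 2 * s) + 4 * s ^ 2 + 2 * s := by ring
      rw [h1, hs2]; ring
    rw [hexp] at hlt
    have hub : Nat.card A ≤ 72 := by exact_mod_cast (by linarith : ((Nat.card A : ℕ) : ℝ) ≤ 72)
    have hlb : 70 < Nat.card A := by exact_mod_cast (by linarith : (70 : ℝ) < ((Nat.card A : ℕ) : ℝ))
    have hc : Nat.card A = 71 ∨ Nat.card A = 72 := by omega
    rcases hc with h | h
    · exact hns (solv_prime (by norm_num) h)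
    · exact hns (solv72 h)
  -- g = 8
  · exfalso
    push_cast at hlt hle
    set s := Real.sqrt (8 : ℝ) with hsdef
    have hs0 : (0 : ℝ) ≤ s := Real.sqrt_nonneg _
    have hs2 : s ^ 2 = (8 : ℝ) := Real.sq_sqrt (by norm_num)
    have hsr : (14/5 : ℝ) ≤ s := by nlinarith
    have hexp : 2 * s * (s + 1) ^ 2 = 18 * s + 32 := by
      have h1 : 2 * s * (s + 1) ^ 2 = 2 * (s ^ 2 * s) + 4 * s ^ 2 + 2 * s := by ring
      rw [h1, hs2]; ring
    rw [hexp] at hlt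
    have hub : Nat.card A ≤ 84 := by exact_mod_cast (by linarith : ((Nat.card A : ℕ) : ℝ) ≤ 84)
    have hlb : 82 < Nat.card A := by exact_mod_cast (by linarith : (82 : ℝ) < ((Nat.card A : ℕ) : ℝ))
    have hc : Nat.card A = 83 ∨ Nat.card A = 84 := by omega
    rcases hc with h | h
    · exact hns (solv_prime (by norm_num) h)
    · exact hns (solv84 h)
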